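/- Independent process noise case: in the data setting with F = 0 and E ∈ ℝ^{n×q} arbitrary (so that 𝒜_dat = { A ∈ ℝ^{n×n} : ∃ W₋ ∈ ℝ^{q×T} with X₊ = A X₋ + B U₋ + E W₋ }; assume 𝒜_dat ≠ ∅), let M ∈ ℝ^{k×n} be such that ker M = im E. Then rank [A − λI, B] = n for every A ∈ 𝒜_dat and every λ ∈ ℂ (informativity for controllability) if and only if ker M ⊆ im B and rank [M X₊ − λ M X₋, M B] = rank M for all λ ∈ ℂ; and rank [A − λI, B] = n for every A ∈ 𝒜_dat and every λ with |λ| ≥ 1 (informativity for stabilizability) if and only if ker M ⊆ im B and rank [M X₊ − λ M X₋, M B] = rank M for all λ ∈ ℂ with |λ| ≥ 1. -/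

import Mathlib

set_option linter.unusedSectionVars false
set_option maxHeartbeats 1000000

open Matrix Module

/-- Complexification of a real matrix. -/
noncomputable def cx {a b : ℕ} (M : Matrix (Fin a) (Fin b) ℝ) : Matrix (Fin a) (Fin b) ℂ :=
  M.map (algebraMap ℝ ℂ)

/-! ### Auxiliary: perp spaces w.r.t. the dot product pairing -/

section Perp
variable {K : Type*} [Field K] {n : ℕ}

noncomputable def perpSub (p : Submodule K (Fin n → K)) : Submodule K (Fin n → K) :=
  p.dualAnnihilator.comap (Pi.basisFun K (Fin n)).toDualEquiv.toLinearMap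

lemma toDual_basisFun_apply (a y : Fin n → K) :
    (Pi.basisFun K (Fin n)).toDual a y = a ⬝ᵥ y := by
  have hy : y = ∑ j, y j • (Pi.basisFun K (Fin n)) j := by
    ext t
    simp [Pi.basisFun_apply, Finset.sum_apply, Pi.single_apply]
  conv_lhs => rw [hy]
  rw [map_sum]
  simp only [_root_.map_smul, smul_eq_mul, Basis.toDual_apply_left, Pi.basisFun_repr]
  rw [dotProduct_comm]
  simp [dotProduct]

lemma mem_perpSub {p : Submodule K (Fin n → K)} {a : Fin n → K} :
    a ∈ perpSub p ↔ ∀ y ∈ p, a ⬝ᵥ y = 0 := by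
  simp only [perpSub, Submodule.mem_comap, LinearEquiv.coe_coe, Basis.toDualEquiv_apply,
    Submodule.mem_dualAnnihilator]
  constructor
  · intro h y hy; rw [← toDual_basisFun_apply]; exact h y hy
  · intro h y hy; rw [toDual_basisFun_apply]; exact h y hy

lemma finrank_perpSub_add (p : Submodule K (Fin n → K)) :
    finrank K (perpSub p) + finrank K p = n := by
  have h1 : finrank K (perpSub p) = finrank K p.dualAnnihilator := by
    rw [perpSub, Submodule.comap_equiv_eq_map_symm]
    exact LinearEquiv.finrank_map_eq _ _
  have h2 : finrank K p.dualAnnihilator = finrank K ((Fin n → K) ⧸ p) :=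
    (LinearEquiv.finrank_eq (Subspace.quotEquivAnnihilator p)).symm
  rw [h1, h2, Submodule.finrank_quotient_add_finrank]
  simp [finrank_pi]

lemma exists_dot_sep {p : Submodule K (Fin n → K)} {x : Fin n → K} (hx : x ∉ p) :
    ∃ a : Fin n → K, (∀ y ∈ p, a ⬝ᵥ y = 0) ∧ a ⬝ᵥ x ≠ 0 := by
  by_contra hcon
  push_neg at hcon
  have hxpp : x ∈ perpSub (perpSub p) := by
    rw [mem_perpSub]
    intro a ha
    rw [mem_perpSub] at ha
    rw [dotProduct_comm]
    exact hcon a ha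
  have hle : p ≤ perpSub (perpSub p) := by
    intro y hy
    rw [mem_perpSub]
    intro a ha
    rw [mem_perpSub] at ha
    rw [dotProduct_comm]
    exact ha y hy
  have h1 := finrank_perpSub_add (perpSub p)
  have h2 := finrank_perpSub_add p
  have : p = perpSub (perpSub p) :=
    Submodule.eq_of_le_of_finrank_le hle (by omega)
  exact hx (this ▸ hxpp)

lemma exists_vecMul_eq {r : ℕ} {N : Matrix (Fin r) (Fin n) K} {a : Fin n → K}
    (h : ∀ y : Fin n → K, N *ᵥ y = 0 → a ⬝ᵥ y = 0) : ∃ u : Fin r → K, u ᵥ* N = a := by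
  set p := LinearMap.ker N.mulVecLin with hp
  have hle : LinearMap.range (Nᵀ.mulVecLin) ≤ perpSub p := by
    rintro _ ⟨u, rfl⟩
    rw [mem_perpSub]
    intro y hy
    have hy' : N *ᵥ y = 0 := hy
    rw [mulVecLin_apply, mulVec_transpose, ← dotProduct_mulVec, hy', dotProduct_zero]
  have hrank : finrank K (LinearMap.range (Nᵀ.mulVecLin)) = finrank K (perpSub p) := by
    have h1 : finrank K (LinearMap.range (Nᵀ.mulVecLin)) = N.rank := by
      rw [← Matrix.rank_transpose N]; rfl
    have h2 : N.rank + finrank K p = n := by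
      have := LinearMap.finrank_range_add_finrank_ker N.mulVecLin
      simpa [Matrix.rank] using this
    have h3 := finrank_perpSub_add p
    omega
  have heq : LinearMap.range (Nᵀ.mulVecLin) = perpSub p :=
    Submodule.eq_of_le_of_finrank_le hle (le_of_eq hrank.symm)
  have hmem : a ∈ perpSub p := by
    rw [mem_perpSub]; intro y hy; exact h y hy
  rw [← heq] at hmem
  obtain ⟨u, hu⟩ := hmem
  exact ⟨u, by rw [← mulVec_transpose]; exact hu⟩

end Perp

/-! ### Auxiliary: rank and left kernels -/

section RankLemmas
variable {K : Type*} [Field K]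

lemma rank_eq_card_rows_iff {m o : Type*} [Fintype m] [Fintype o] (N : Matrix m o K) :
    N.rank = Fintype.card m ↔ ∀ v : m → K, v ᵥ* N = 0 → v = 0 := by
  have hrn := LinearMap.finrank_range_add_finrank_ker Nᵀ.mulVecLin
  rw [Module.finrank_pi] at hrn
  have hr : N.rank = finrank K (LinearMap.range Nᵀ.mulVecLin) := by
    rw [← Matrix.rank_transpose N]; rfl
  constructor
  · intro h v hv
    have hker : finrank K (LinearMap.ker Nᵀ.mulVecLin) = 0 := by omega
    have : LinearMap.ker Nᵀ.mulVecLin = ⊥ := Submodule.finrank_eq_zero.mp hker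
    have hv' : v ∈ LinearMap.ker Nᵀ.mulVecLin := by
      rw [LinearMap.mem_ker, mulVecLin_apply, mulVec_transpose]; exact hv
    rw [this] at hv'
    exact hv'
  · intro h
    have : LinearMap.ker Nᵀ.mulVecLin = ⊥ := by
      rw [LinearMap.ker_eq_bot']
      intro v hv
      exact h v (by rw [← mulVec_transpose]; exact hv)
    rw [this, finrank_bot] at hrn
    omega

lemma rank_mul_eq_rank_iff {l n o : Type*} [Fintype l] [Fintype n] [Fintype o]
    (M : Matrix l n K) (P : Matrix n o K) :
    (M * P).rank = M.rank ↔ ∀ v : l → K, v ᵥ* (M * P) = 0 → v ᵥ* M = 0 := by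
  have hle : LinearMap.ker Mᵀ.mulVecLin ≤ LinearMap.ker (M * P)ᵀ.mulVecLin := by
    intro v hv
    rw [LinearMap.mem_ker, mulVecLin_apply] at hv ⊢
    rw [transpose_mul, ← mulVec_mulVec, hv, mulVec_zero]
  have h1 := LinearMap.finrank_range_add_finrank_ker Mᵀ.mulVecLin
  have h2 := LinearMap.finrank_range_add_finrank_ker (M * P)ᵀ.mulVecLin
  rw [Module.finrank_pi] at h1 h2
  have hrM : M.rank = finrank K (LinearMap.range Mᵀ.mulVecLin) := by
    rw [← Matrix.rank_transpose M]; rfl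
  have hrMP : (M * P).rank = finrank K (LinearMap.range (M * P)ᵀ.mulVecLin) := by
    rw [← Matrix.rank_transpose (M * P)]; rfl
  constructor
  · intro h v hv
    have hker : LinearMap.ker Mᵀ.mulVecLin = LinearMap.ker (M * P)ᵀ.mulVecLin :=
      Submodule.eq_of_le_of_finrank_le hle (by omega)
    have hv' : v ∈ LinearMap.ker (M * P)ᵀ.mulVecLin := by
      rw [LinearMap.mem_ker, mulVecLin_apply, mulVec_transpose]; exact hv
    rw [← hker] at hv'
    have : Mᵀ *ᵥ v = 0 := hv'
    rw [mulVec_transpose] at this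
    exact this
  · intro h
    have hge : LinearMap.ker (M * P)ᵀ.mulVecLin ≤ LinearMap.ker Mᵀ.mulVecLin := by
      intro v hv
      rw [LinearMap.mem_ker, mulVecLin_apply, mulVec_transpose] at hv ⊢
      exact h v hv
    have hkereq := le_antisymm hle hge
    rw [hkereq] at h1
    omega

end RankLemmas

/-! ### Auxiliary: complexification -/

section Cx
variable {a b c : ℕ}

def cv {a : ℕ} (v : Fin a → ℝ) : Fin a → ℂ := fun i => (v i : ℂ)

def reV {a : ℕ} (x : Fin a → ℂ) : Fin a → ℝ := fun i => (x i).re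
def imV {a : ℕ} (x : Fin a → ℂ) : Fin a → ℝ := fun i => (x i).im

@[simp] lemma cv_eq_zero {v : Fin a → ℝ} : cv v = 0 ↔ v = 0 := by
  constructor
  · intro h; ext i; have := congrFun h i
    simpa [cv] using this
  · rintro rfl; ext i; simp [cv]

lemma cv_smul (r : ℝ) (v : Fin a → ℝ) : cv (r • v) = (r : ℂ) • cv v := by
  ext i; simp [cv]

lemma cv_add (v w : Fin a → ℝ) : cv (v + w) = cv v + cv w := by
  ext i; simp [cv]

lemma cv_re_add_im (x : Fin a → ℂ) : x = cv (reV x) + Complex.I • cv (imV x) := by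
  ext i
  simp [cv, reV, imV, Complex.ext_iff]

lemma cv_add_I_smul_eq_zero {u v : Fin a → ℝ} :
    cv u + Complex.I • cv v = 0 ↔ u = 0 ∧ v = 0 := by
  constructor
  · intro h
    constructor <;> ext i <;>
    · have := congrFun h i
      simp only [Pi.add_apply, Pi.smul_apply, Pi.zero_apply, cv, smul_eq_mul] at this
      rw [Complex.ext_iff] at this
      simp at this
      tauto
  · rintro ⟨rfl, rfl⟩; ext i; simp [cv]

lemma cx_mul {M : Matrix (Fin a) (Fin b) ℝ} {N : Matrix (Fin b) (Fin c) ℝ} :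
    cx (M * N) = cx M * cx N := by
  ext i j
  simp [cx, Matrix.mul_apply, map_sum]

lemma cx_add {M N : Matrix (Fin a) (Fin b) ℝ} : cx (M + N) = cx M + cx N := by
  ext i j; simp [cx]

@[simp] lemma cx_zero : cx (0 : Matrix (Fin a) (Fin b) ℝ) = 0 := by
  ext i j; simp [cx]

lemma cv_vecMul (v : Fin a → ℝ) (M : Matrix (Fin a) (Fin b) ℝ) :
    cv v ᵥ* cx M = cv (v ᵥ* M) := by
  ext i
  exact (RingHom.map_vecMul (algebraMap ℝ ℂ) M v i).symm

lemma vecMul_cx_split (x : Fin a → ℂ) (M : Matrix (Fin a) (Fin b) ℝ) :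
    x ᵥ* cx M = cv (reV x ᵥ* M) + Complex.I • cv (imV x ᵥ* M) := by
  conv_lhs => rw [cv_re_add_im x]
  rw [add_vecMul, smul_vecMul, cv_vecMul, cv_vecMul]

lemma vecMul_cx_eq_zero_iff {x : Fin a → ℂ} {M : Matrix (Fin a) (Fin b) ℝ} :
    x ᵥ* cx M = 0 ↔ reV x ᵥ* M = 0 ∧ imV x ᵥ* M = 0 := by
  rw [vecMul_cx_split, cv_add_I_smul_eq_zero]

/-- `cv` as an ℝ-linear map. -/
def cvL (a : ℕ) : (Fin a → ℝ) →ₗ[ℝ] (Fin a → ℂ) where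
  toFun := cv
  map_add' := fun v w => by ext i; simp [cv]
  map_smul' := fun r v => by ext i; simp [cv]

lemma li_cv {a : ℕ} {ι : Type*} {v : ι → (Fin a → ℝ)} (h : LinearIndependent ℝ v) :
    LinearIndependent ℂ (fun i => cv (v i)) := by
  rw [linearIndependent_iff'] at h ⊢
  intro s g hg i hi
  have hre : ∀ j : ι, j ∈ s → (fun i => (g i).re) j = 0 := by
    apply h s (fun i => (g i).re)
    ext t
    have := congrFun hg t
    simp only [Finset.sum_apply, Pi.smul_apply, Pi.zero_apply, smul_eq_mul, cv] at this ⊢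
    have := congrArg Complex.re this
    simpa [Complex.re_sum] using this
  have him : ∀ j : ι, j ∈ s → (fun i => (g i).im) j = 0 := by
    apply h s (fun i => (g i).im)
    ext t
    have := congrFun hg t
    simp only [Finset.sum_apply, Pi.smul_apply, Pi.zero_apply, smul_eq_mul, cv] at this ⊢
    have := congrArg Complex.im this
    simpa [Complex.im_sum] using this
  have h1 := hre i hi
  have h2 := him i hi
  simp only at h1 h2
  exact Complex.ext h1 h2

lemma rank_cx {a b : ℕ} (M : Matrix (Fin a) (Fin b) ℝ) : (cx M).rank = M.rank := by
  classical
  rw [Matrix.rank_eq_finrank_span_cols, Matrix.rank_eq_finrank_span_cols]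
  set S : Set (Fin a → ℝ) := Set.range M.col with hS
  obtain ⟨t, htS, hspan, hli⟩ := exists_linearIndependent ℝ S
  have htfin : t.Finite := (Set.finite_range M.col).subset htS
  haveI : Fintype t := htfin.fintype
  have hreal : finrank ℝ (Submodule.span ℝ (Set.range M.col)) = t.toFinset.card := by
    rw [← hS, ← hspan, finrank_span_set_eq_card hli, Set.toFinset_card]
  have hcols : Set.range (cx M).col = cv '' S := by
    have hfun : (cx M).col = cv ∘ M.col := by
      ext j i
      simp [Matrix.col, cx, cv, Function.comp]
    rw [hS, ← Set.range_comp, hfun]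
  have hspanC : Submodule.span ℂ (cv '' S) = Submodule.span ℂ (cv '' t) := by
    apply le_antisymm
    · rw [Submodule.span_le]
      rintro _ ⟨s, hsS, rfl⟩
      have hs : s ∈ Submodule.span ℝ t := by rw [hspan]; exact Submodule.subset_span hsS
      have : cvL a s ∈ Submodule.map (cvL a) (Submodule.span ℝ t) := ⟨s, hs, rfl⟩
      rw [Submodule.map_span] at this
      have hle : Submodule.span ℝ (cvL a '' t) ≤
          (Submodule.span ℂ (cv '' t)).restrictScalars ℝ := by
        rw [Submodule.span_le]
        rintro _ ⟨y, hy, rfl⟩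
        exact Submodule.subset_span ⟨y, hy, rfl⟩
      exact hle this
    · exact Submodule.span_mono (Set.image_mono htS)
  have hliC : LinearIndependent ℂ ((↑) : (cv '' t) → (Fin a → ℂ)) := by
    have h1 : LinearIndependent ℂ (fun x : t => cv (x : Fin a → ℝ)) := li_cv hli
    have hinj : Set.InjOn cv t := by
      intro x _ y _ hxy
      ext i
      have := congrFun hxy i
      simpa [cv] using this
    exact (linearIndepOn_iff_image hinj).mp h1
  haveI : Fintype (cv '' t) := (htfin.image cv).fintype
  have hcplx : finrank ℂ (Submodule.span ℂ (Set.range (cx M).col)) = (cv '' t).toFinset.card := by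
    rw [hcols, hspanC, finrank_span_set_eq_card hliC, Set.toFinset_card]
  rw [hcplx, hreal]
  rw [Set.toFinset_card, Set.toFinset_card]
  rw [Set.card_image_of_injective _ ?_]
  intro x y hxy
  ext i
  have := congrFun hxy i
  simpa [cv] using this

end Cx

/-! ### Auxiliary: elementary matrix identities -/

section VMV
variable {K : Type*} [Field K] {l n o : Type*} [Fintype l] [Fintype n] [Fintype o]

lemma mul_vecMulVec (M : Matrix l n K) (x : n → K) (c : o → K) :
    M * vecMulVec x c = vecMulVec (M *ᵥ x) c := by
  ext i j
  simp [Matrix.mul_apply, vecMulVec_apply, mulVec, dotProduct, Finset.sum_mul, mul_assoc]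

lemma vecMulVec_mul (x : l → K) (c : n → K) (N : Matrix n o K) :
    vecMulVec x c * N = vecMulVec x (c ᵥ* N) := by
  ext i j
  simp [Matrix.mul_apply, vecMulVec_apply, vecMul, dotProduct, Finset.mul_sum, mul_assoc]

lemma vecMul_vecMulVec (a : l → K) (x : l → K) (c : n → K) :
    a ᵥ* vecMulVec x c = (a ⬝ᵥ x) • c := by
  ext j
  simp [vecMul, vecMulVec_apply, dotProduct, Finset.sum_mul, mul_assoc]

lemma vecMul_smulMat (v : l → K) (c : K) (A : Matrix l n K) :
    v ᵥ* (c • A) = c • (v ᵥ* A) := by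
  ext j
  simp [vecMul, dotProduct, Finset.mul_sum]
  congr 1
  ext i
  ring

@[simp] lemma vecMulVec_zero_right (x : l → K) : vecMulVec x (0 : n → K) = 0 := by
  ext i j; simp [vecMulVec_apply]

@[simp] lemma vecMulVec_zero_left (c : n → K) : vecMulVec (0 : l → K) c = 0 := by
  ext i j; simp [vecMulVec_apply]

end VMV

lemma mulVec_col {k n T : ℕ} {K : Type*} [Field K] (M : Matrix (Fin k) (Fin n) K)
    (R : Matrix (Fin n) (Fin T) K) (t : Fin T) :
    M *ᵥ (fun i => R i t) = fun i => (M * R) i t := by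
  ext i
  simp [mulVec, Matrix.mul_apply, dotProduct]

lemma vecMul_apply_eq_dot {n p : ℕ} {K : Type*} [Field K] (c : Fin n → K)
    (N : Matrix (Fin n) (Fin p) K) (j : Fin p) : (c ᵥ* N) j = c ⬝ᵥ (fun i => N i j) := by
  simp [vecMul, dotProduct]

/-- First T columns of the state data matrix X. -/
def Xminus {n T : ℕ} (X : Matrix (Fin n) (Fin (T + 1)) ℝ) : Matrix (Fin n) (Fin T) ℝ :=
  Matrix.of fun i t => X i t.castSucc

/-- Last T columns of the state data matrix X. -/
def Xplus {n T : ℕ} (X : Matrix (Fin n) (Fin (T + 1)) ℝ) : Matrix (Fin n) (Fin T) ℝ :=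
  Matrix.of fun i t => X i t.succ

/-- The set of state matrices A consistent with the data in the case of
(independent) process noise only (F = 0). -/
def AdatP {n m q T : ℕ} (B : Matrix (Fin n) (Fin m) ℝ) (E : Matrix (Fin n) (Fin q) ℝ)
    (U : Matrix (Fin m) (Fin T) ℝ) (X : Matrix (Fin n) (Fin (T + 1)) ℝ) :
    Set (Matrix (Fin n) (Fin n) ℝ) :=
  {A | ∃ W : Matrix (Fin q) (Fin T) ℝ, Xplus X = A * Xminus X + B * U + E * W}

section Adat
variable {n m q T k : ℕ}
variable {B : Matrix (Fin n) (Fin m) ℝ} {E : Matrix (Fin n) (Fin q) ℝ}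
variable {U : Matrix (Fin m) (Fin T) ℝ} {X : Matrix (Fin n) (Fin (T + 1)) ℝ}
variable {M : Matrix (Fin k) (Fin n) ℝ}

lemma ME_eq_zero (hM : LinearMap.ker M.mulVecLin = LinearMap.range E.mulVecLin) :
    M * E = 0 := by
  ext i j
  have hcol : (fun l => E l j) ∈ LinearMap.range E.mulVecLin := by
    refine ⟨Pi.single j 1, ?_⟩
    simp [mulVecLin_apply]; rfl
  rw [← hM] at hcol
  have : M *ᵥ (fun l => E l j) = 0 := hcol
  have := congrFun this i
  simpa [Matrix.mul_apply, mulVec, dotProduct] using this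

lemma mem_AdatP_iff (hM : LinearMap.ker M.mulVecLin = LinearMap.range E.mulVecLin)
    {A : Matrix (Fin n) (Fin n) ℝ} :
    A ∈ AdatP B E U X ↔ M * Xplus X = M * (A * Xminus X) + M * (B * U) := by
  constructor
  · rintro ⟨W, hW⟩
    rw [hW, Matrix.mul_add, Matrix.mul_add, ← Matrix.mul_assoc M E W, ME_eq_zero hM,
      Matrix.zero_mul, add_zero]
  · intro h
    set R : Matrix (Fin n) (Fin T) ℝ := Xplus X - A * Xminus X - B * U with hR
    have hMR : M * R = 0 := by
      rw [hR, Matrix.mul_sub, Matrix.mul_sub, h]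
      abel
    have hcols : ∀ t : Fin T, ∃ w : Fin q → ℝ, E *ᵥ w = fun i => R i t := by
      intro t
      have hker : (fun i => R i t) ∈ LinearMap.ker M.mulVecLin := by
        rw [LinearMap.mem_ker, mulVecLin_apply, mulVec_col, hMR]
        rfl
      rw [hM] at hker
      obtain ⟨w, hw⟩ := hker
      exact ⟨w, hw⟩
    refine ⟨Matrix.of fun i t => (hcols t).choose i, ?_⟩
    have : E * (Matrix.of fun i t => (hcols t).choose i) = R := by
      ext i t
      have := congrFun (hcols t).choose_spec i
      simpa [Matrix.mul_apply, mulVec, dotProduct] using this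
    rw [this, hR]
    abel

lemma AdatP_add_mem (hM : LinearMap.ker M.mulVecLin = LinearMap.range E.mulVecLin)
    {A₀ Θ : Matrix (Fin n) (Fin n) ℝ} (h₀ : A₀ ∈ AdatP B E U X)
    (hΘ : M * (Θ * Xminus X) = 0) : A₀ + Θ ∈ AdatP B E U X := by
  rw [mem_AdatP_iff hM] at h₀ ⊢
  rw [Matrix.add_mul, Matrix.mul_add, hΘ, add_zero]
  exact h₀

end Adat

/-! ### Translation of rank conditions into left-kernel conditions -/

lemma sum_elim_eq_zero_iff {α β γ : Type*} [Zero γ] {f : α → γ} {g : β → γ} :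
    Sum.elim f g = 0 ↔ f = 0 ∧ g = 0 := by
  constructor
  · intro h
    exact ⟨funext fun i => congrFun h (Sum.inl i), funext fun j => congrFun h (Sum.inr j)⟩
  · rintro ⟨rfl, rfl⟩
    ext (i | j) <;> rfl

lemma rank_fromColumns_full_iff {n m : ℕ} (C : Matrix (Fin n) (Fin n) ℂ)
    (D : Matrix (Fin n) (Fin m) ℂ) :
    (fromCols C D).rank = n ↔ ∀ ξ : Fin n → ℂ, ξ ᵥ* C = 0 → ξ ᵥ* D = 0 → ξ = 0 := by
  have h := rank_eq_card_rows_iff (fromCols C D)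
  rw [Fintype.card_fin] at h
  rw [h]
  constructor
  · intro h ξ h1 h2
    exact h ξ (by rw [vecMul_fromCols, h1, h2]; exact sum_elim_eq_zero_iff.mpr ⟨rfl, rfl⟩)
  · intro h ξ hξ
    rw [vecMul_fromCols, sum_elim_eq_zero_iff] at hξ
    exact h ξ hξ.1 hξ.2

lemma rank_mul_fromColumns_iff {k n c1 c2 : ℕ} (Mc : Matrix (Fin k) (Fin n) ℂ)
    (P : Matrix (Fin n) (Fin c1) ℂ) (Q : Matrix (Fin n) (Fin c2) ℂ) :
    (fromCols (Mc * P) (Mc * Q)).rank = Mc.rank ↔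
      ∀ η : Fin k → ℂ, η ᵥ* (Mc * P) = 0 → η ᵥ* (Mc * Q) = 0 → η ᵥ* Mc = 0 := by
  rw [← mul_fromCols, rank_mul_eq_rank_iff]
  constructor
  · intro h η h1 h2
    refine h η ?_
    rw [mul_fromCols, vecMul_fromCols, h1, h2]
    exact sum_elim_eq_zero_iff.mpr ⟨rfl, rfl⟩
  · intro h η hη
    rw [mul_fromCols, vecMul_fromCols, sum_elim_eq_zero_iff] at hη
    exact h η hη.1 hη.2

/-! ### The main auxiliary equivalence -/

section Main
variable {n m q T k : ℕ}

lemma main_aux (S : Set ℂ) (hS1 : (1:ℂ) ∈ S)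
    (B : Matrix (Fin n) (Fin m) ℝ) (E : Matrix (Fin n) (Fin q) ℝ)
    (U : Matrix (Fin m) (Fin T) ℝ) (X : Matrix (Fin n) (Fin (T + 1)) ℝ)
    (M : Matrix (Fin k) (Fin n) ℝ)
    (hAdat : (AdatP B E U X).Nonempty)
    (hM : LinearMap.ker M.mulVecLin = LinearMap.range E.mulVecLin) :
    (∀ A ∈ AdatP B E U X, ∀ lam ∈ S, (fromCols (cx A - lam • 1) (cx B)).rank = n) ↔
      (LinearMap.ker M.mulVecLin ≤ LinearMap.range B.mulVecLin ∧
        ∀ lam ∈ S, (fromCols (cx M * cx (Xplus X) - lam • (cx M * cx (Xminus X)))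
            (cx M * cx B)).rank = M.rank) := by
  obtain ⟨A₀, W₀, hA₀⟩ := hAdat
  have hA₀mem : A₀ ∈ AdatP B E U X := ⟨W₀, hA₀⟩
  have hT2 : ∀ lam : ℂ,
      ((fromCols (cx M * cx (Xplus X) - lam • (cx M * cx (Xminus X)))
          (cx M * cx B)).rank = M.rank ↔
        ∀ η : Fin k → ℂ, η ᵥ* (cx M * (cx (Xplus X) - lam • cx (Xminus X))) = 0 →
          η ᵥ* (cx M * cx B) = 0 → η ᵥ* cx M = 0) := by
    intro lam
    have hrw : cx M * cx (Xplus X) - lam • (cx M * cx (Xminus X)) =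
        cx M * (cx (Xplus X) - lam • cx (Xminus X)) := by
      rw [Matrix.mul_sub, Matrix.mul_smul]
    rw [hrw, ← rank_cx M]
    exact rank_mul_fromColumns_iff (cx M) _ (cx B)
  have hsub : ∀ (A : Matrix (Fin n) (Fin n) ℝ) (lam : ℂ) (ξ : Fin n → ℂ),
      ξ ᵥ* (cx A - lam • 1) = ξ ᵥ* cx A - lam • ξ := by
    intro A lam ξ
    rw [vecMul_sub, vecMul_smulMat, vecMul_one]
  have hEcol : ∀ j, M *ᵥ (fun i => E i j) = 0 := by
    intro j
    rw [mulVec_col, ME_eq_zero hM]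
    ext i
    simp
  constructor
  · -- informativity implies the data conditions
    intro hinf
    constructor
    · -- ker M ⊆ im B
      intro x hx
      by_contra hxB
      obtain ⟨a, ha0, hax⟩ := exists_dot_sep hxB
      have haB : a ᵥ* B = 0 := by
        ext j
        rw [Pi.zero_apply, vecMul_apply_eq_dot]
        exact ha0 _ ⟨Pi.single j 1, by simp [mulVecLin_apply]; rfl⟩
      have hxker : M *ᵥ x = 0 := hx
      set c : Fin n → ℝ := (a ⬝ᵥ x)⁻¹ • (a - a ᵥ* A₀) with hc
      set A : Matrix (Fin n) (Fin n) ℝ := A₀ + vecMulVec x c with hA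
      have hAmem : A ∈ AdatP B E U X := by
        refine AdatP_add_mem hM hA₀mem ?_
        rw [_root_.vecMulVec_mul, _root_.mul_vecMulVec, hxker, vecMulVec_zero_left]
      have haA : a ᵥ* A = a := by
        rw [hA, vecMul_add, _root_.vecMul_vecMulVec, hc, smul_smul, mul_inv_cancel₀ hax, one_smul]
        abel
      have hcert1 : cv a ᵥ* (cx A - (1:ℂ) • 1) = 0 := by
        rw [hsub, cv_vecMul, haA, one_smul, sub_self]
      have hcert2 : cv a ᵥ* cx B = 0 := by
        rw [cv_vecMul, haB]
        exact cv_eq_zero.mpr rfl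
      have h0 : cv a = 0 :=
        (rank_fromColumns_full_iff _ _).mp (hinf A hAmem 1 hS1) (cv a) hcert1 hcert2
      rw [cv_eq_zero.mp h0, zero_dotProduct] at hax
      exact hax rfl
    · -- the rank condition
      intro lam hlam
      rw [hT2 lam]
      intro η hη1 hη2
      set ξ : Fin n → ℂ := η ᵥ* cx M with hξdef
      by_contra hξ0
      have hξB : ξ ᵥ* cx B = 0 := by rw [hξdef, vecMul_vecMul]; exact hη2
      have hξE : ξ ᵥ* cx E = 0 := by
        rw [hξdef, vecMul_vecMul, ← cx_mul, ME_eq_zero hM, cx_zero, vecMul_zero]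
      have hξX : ξ ᵥ* cx (Xplus X) = lam • (ξ ᵥ* cx (Xminus X)) := by
        have h := hη1
        rw [← vecMul_vecMul, ← hξdef, vecMul_sub, vecMul_smulMat, sub_eq_zero] at h
        exact h
      have hdataC : cx (Xplus X) = cx A₀ * cx (Xminus X) + cx B * cx U + cx E * cx W₀ := by
        rw [← cx_mul, ← cx_mul, ← cx_mul, ← cx_add, ← cx_add, hA₀]
      have hξA₀X : ξ ᵥ* (cx A₀ * cx (Xminus X)) = ξ ᵥ* cx (Xplus X) := by
        conv_rhs => rw [hdataC]
        rw [vecMul_add, vecMul_add, ← vecMul_vecMul ξ (cx B), ← vecMul_vecMul ξ (cx E),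
          hξB, hξE, zero_vecMul, zero_vecMul, add_zero, add_zero]
      set r : Fin n → ℂ := lam • ξ - ξ ᵥ* cx A₀ with hrdef
      have hrX : r ᵥ* cx (Xminus X) = 0 := by
        rw [hrdef, sub_vecMul, smul_vecMul, vecMul_vecMul ξ (cx A₀) (cx (Xminus X)), hξA₀X, hξX, sub_self]
      set a := reV ξ with hadef
      set b := imV ξ with hbdef
      by_cases hcol : (∃ t : ℝ, b = t • a) ∨ (∃ t : ℝ, a = t • b)
      · -- the "essentially real direction" case
        obtain ⟨w, γ, hw0, hγ0, hξw⟩ :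
            ∃ (w : Fin n → ℝ) (γ : ℂ), w ≠ 0 ∧ γ ≠ 0 ∧ ξ = γ • cv w := by
          rcases hcol with ⟨t, hb⟩ | ⟨t, ha⟩
          · refine ⟨a, 1 + (t : ℂ) * Complex.I, ?_, ?_, ?_⟩
            · intro h0
              apply hξ0
              rw [cv_re_add_im ξ, ← hadef, ← hbdef, hb, h0, smul_zero]
              ext i
              simp [cv]
            · intro h
              have := congrArg Complex.re h
              simp at this
            · rw [cv_re_add_im ξ, ← hadef, ← hbdef, hb, cv_smul]
              ext i
              simp [cv]
              ring
          · refine ⟨b, (t : ℂ) + Complex.I, ?_, ?_, ?_⟩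
            · intro h0
              apply hξ0
              rw [cv_re_add_im ξ, ← hadef, ← hbdef, ha, h0, smul_zero]
              ext i
              simp [cv]
            · intro h
              have := congrArg Complex.im h
              simp at this
            · rw [cv_re_add_im ξ, ← hadef, ← hbdef, ha, cv_smul]
              ext i
              simp [cv]
              ring
        have hdiv : ∀ {p : ℕ} (N : Matrix (Fin n) (Fin p) ℝ),
            ξ ᵥ* cx N = γ • (cv (w ᵥ* N)) := by
          intro p N
          rw [hξw, smul_vecMul, cv_vecMul]
        have hwB : w ᵥ* B = 0 := by
          have h := hξB
          rw [hdiv B, smul_eq_zero] at h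
          rcases h with h | h
          · exact absurd h hγ0
          · exact cv_eq_zero.mp h
        have hwE : w ᵥ* E = 0 := by
          have h := hξE
          rw [hdiv E, smul_eq_zero] at h
          rcases h with h | h
          · exact absurd h hγ0
          · exact cv_eq_zero.mp h
        have hwX : cv (w ᵥ* Xplus X) = lam • cv (w ᵥ* Xminus X) := by
          have h := hξX
          rw [hdiv (Xplus X), hdiv (Xminus X), smul_comm lam γ] at h
          exact smul_right_injective _ hγ0 h
        obtain ⟨μ, hμS, hμeq⟩ :
            ∃ μ : ℝ, (μ : ℂ) ∈ S ∧ w ᵥ* Xplus X = μ • (w ᵥ* Xminus X) := by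
          by_cases him : lam.im = 0
          · refine ⟨lam.re, ?_, ?_⟩
            · have hre : (lam.re : ℂ) = lam := Complex.ext (by simp) (by simp [him])
              rw [hre]
              exact hlam
            · ext t
              have h := congrFun hwX t
              simp only [cv, Pi.smul_apply, smul_eq_mul] at h
              have hre := congrArg Complex.re h
              simpa [him] using hre
          · have hXm : w ᵥ* Xminus X = 0 := by
              ext t
              have h := congrFun hwX t
              simp only [cv, Pi.smul_apply, smul_eq_mul] at h
              have him2 := congrArg Complex.im h
              simp only [Complex.ofReal_im, Complex.mul_im, Complex.ofReal_re,
                mul_zero, add_zero, zero_add] at him2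
              rcases mul_eq_zero.mp him2.symm with h' | h'
              · exact absurd h' him
              · simpa using h'
            have hXp : w ᵥ* Xplus X = 0 := by
              have h : cv (w ᵥ* Xplus X) = 0 := by
                rw [hwX, hXm]
                simp [cv]
              exact cv_eq_zero.mp h
            exact ⟨1, hS1, by rw [hXm, hXp, smul_zero]⟩
        have hwA₀X : w ᵥ* (A₀ * Xminus X) = w ᵥ* Xplus X := by
          conv_rhs => rw [hA₀]
          rw [vecMul_add, vecMul_add, ← vecMul_vecMul w B U, ← vecMul_vecMul w E W₀,
            hwB, hwE, zero_vecMul, zero_vecMul, add_zero, add_zero]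
        set s : Fin n → ℝ := μ • w - w ᵥ* A₀ with hsdef
        have hsX : s ᵥ* Xminus X = 0 := by
          rw [hsdef, sub_vecMul, smul_vecMul, vecMul_vecMul, hwA₀X, hμeq, sub_self]
        have hww : w ⬝ᵥ w ≠ 0 := fun h => hw0 (dotProduct_self_eq_zero.mp h)
        set u : Fin n → ℝ := (w ⬝ᵥ w)⁻¹ • w with hudef
        set A : Matrix (Fin n) (Fin n) ℝ := A₀ + vecMulVec u s with hA
        have hAmem : A ∈ AdatP B E U X := by
          refine AdatP_add_mem hM hA₀mem ?_
          rw [_root_.vecMulVec_mul, hsX, vecMulVec_zero_right, Matrix.mul_zero]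
        have hwu : w ⬝ᵥ u = 1 := by
          rw [hudef, dotProduct_smul, smul_eq_mul, inv_mul_cancel₀ hww]
        have hwA : w ᵥ* A = μ • w := by
          rw [hA, vecMul_add, _root_.vecMul_vecMulVec, hwu, one_smul, hsdef]
          abel
        have hcert1 : cv w ᵥ* (cx A - (μ : ℂ) • 1) = 0 := by
          rw [hsub, cv_vecMul, hwA, cv_smul, sub_self]
        have hcert2 : cv w ᵥ* cx B = 0 := by
          rw [cv_vecMul, hwB]
          exact cv_eq_zero.mpr rfl
        have h0 : cv w = 0 :=
          (rank_fromColumns_full_iff _ _).mp (hinf A hAmem (μ : ℂ) hμS) (cv w) hcert1 hcert2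
        exact hw0 (cv_eq_zero.mp h0)
      · -- the "truly complex" case: real and imaginary parts independent
        push_neg at hcol
        obtain ⟨hba, hab⟩ := hcol
        have hbspan : a ∉ Submodule.span ℝ {b} := by
          intro h
          obtain ⟨t, ht⟩ := Submodule.mem_span_singleton.mp h
          exact hab t ht.symm
        have haspan : b ∉ Submodule.span ℝ {a} := by
          intro h
          obtain ⟨t, ht⟩ := Submodule.mem_span_singleton.mp h
          exact hba t ht.symm
        obtain ⟨u₀, hu₀, hu₀a⟩ := exists_dot_sep hbspan
        obtain ⟨v₀, hv₀, hv₀b⟩ := exists_dot_sep haspan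
        set u : Fin n → ℝ := (u₀ ⬝ᵥ a)⁻¹ • u₀ with hudef
        set v : Fin n → ℝ := (v₀ ⬝ᵥ b)⁻¹ • v₀ with hvdef
        have hau : a ⬝ᵥ u = 1 := by
          rw [hudef, dotProduct_smul, smul_eq_mul, dotProduct_comm a u₀, inv_mul_cancel₀ hu₀a]
        have hbu : b ⬝ᵥ u = 0 := by
          rw [hudef, dotProduct_smul, dotProduct_comm b u₀,
            hu₀ b (Submodule.mem_span_singleton_self b), smul_zero]
        have hbv : b ⬝ᵥ v = 1 := by
          rw [hvdef, dotProduct_smul, smul_eq_mul, dotProduct_comm b v₀, inv_mul_cancel₀ hv₀b]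
        have hav : a ⬝ᵥ v = 0 := by
          rw [hvdef, dotProduct_smul, dotProduct_comm a v₀,
            hv₀ a (Submodule.mem_span_singleton_self a), smul_zero]
        have hrsplit := vecMul_cx_eq_zero_iff.mp hrX
        set Θ : Matrix (Fin n) (Fin n) ℝ := vecMulVec u (reV r) + vecMulVec v (imV r) with hΘ
        set A : Matrix (Fin n) (Fin n) ℝ := A₀ + Θ with hA
        have hAmem : A ∈ AdatP B E U X := by
          refine AdatP_add_mem hM hA₀mem ?_
          rw [hΘ, Matrix.add_mul, _root_.vecMulVec_mul, _root_.vecMulVec_mul, hrsplit.1, hrsplit.2,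
            vecMulVec_zero_right, vecMulVec_zero_right, add_zero, Matrix.mul_zero]
        have haΘ : a ᵥ* Θ = reV r := by
          rw [hΘ, vecMul_add, _root_.vecMul_vecMulVec, _root_.vecMul_vecMulVec, hau, hav, one_smul,
            zero_smul, add_zero]
        have hbΘ : b ᵥ* Θ = imV r := by
          rw [hΘ, vecMul_add, _root_.vecMul_vecMulVec, _root_.vecMul_vecMulVec, hbu, hbv, one_smul,
            zero_smul, zero_add]
        have hξΘ : ξ ᵥ* cx Θ = r := by
          rw [vecMul_cx_split, ← hadef, ← hbdef, haΘ, hbΘ, ← cv_re_add_im]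
        have hcert1 : ξ ᵥ* (cx A - lam • 1) = 0 := by
          rw [hsub, hA, cx_add, vecMul_add, hξΘ, hrdef]
          abel
        exact hξ0 ((rank_fromColumns_full_iff _ _).mp (hinf A hAmem lam hlam) ξ hcert1 hξB)
  · -- the data conditions imply informativity
    rintro ⟨hker, hrk⟩ A hAmem lam hlam
    obtain ⟨W, hAW⟩ := hAmem
    rw [rank_fromColumns_full_iff]
    intro ξ h1 h2
    have hξA : ξ ᵥ* cx A = lam • ξ := by
      rw [hsub] at h1
      exact sub_eq_zero.mp h1
    set a := reV ξ with hadef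
    set b := imV ξ with hbdef
    have hsplitB := vecMul_cx_eq_zero_iff.mp h2
    have hdot : ∀ c : Fin n → ℝ, c ᵥ* B = 0 → ∀ y, M *ᵥ y = 0 → c ⬝ᵥ y = 0 := by
      intro c hcB y hy
      obtain ⟨z, hz⟩ := hker hy
      rw [← hz, mulVecLin_apply, dotProduct_mulVec, hcB, zero_dotProduct]
    have hcE : ∀ c : Fin n → ℝ, c ᵥ* B = 0 → c ᵥ* E = 0 := by
      intro c hcB
      ext j
      rw [Pi.zero_apply, vecMul_apply_eq_dot]
      exact hdot c hcB _ (hEcol j)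
    obtain ⟨ua, hua⟩ := exists_vecMul_eq (hdot a hsplitB.1)
    obtain ⟨ub, hub⟩ := exists_vecMul_eq (hdot b hsplitB.2)
    set η : Fin k → ℂ := cv ua + Complex.I • cv ub with hη
    have hηM : η ᵥ* cx M = ξ := by
      rw [hη, add_vecMul, smul_vecMul, cv_vecMul, cv_vecMul, hua, hub, ← cv_re_add_im]
    have hξE : ξ ᵥ* cx E = 0 := by
      rw [vecMul_cx_eq_zero_iff]
      exact ⟨hcE a hsplitB.1, hcE b hsplitB.2⟩
    have hdataCA : cx (Xplus X) = cx A * cx (Xminus X) + cx B * cx U + cx E * cx W := by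
      rw [← cx_mul, ← cx_mul, ← cx_mul, ← cx_add, ← cx_add, hAW]
    have hξX : ξ ᵥ* cx (Xplus X) = lam • (ξ ᵥ* cx (Xminus X)) := by
      conv_lhs => rw [hdataCA]
      rw [vecMul_add, vecMul_add, ← vecMul_vecMul ξ (cx A), ← vecMul_vecMul ξ (cx B),
        ← vecMul_vecMul ξ (cx E), hξA, h2, hξE, zero_vecMul, zero_vecMul, add_zero,
        add_zero, smul_vecMul]
    have hc1 : η ᵥ* (cx M * (cx (Xplus X) - lam • cx (Xminus X))) = 0 := by
      rw [← vecMul_vecMul, hηM, vecMul_sub, vecMul_smulMat, hξX, sub_self]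
    have hc2 : η ᵥ* (cx M * cx B) = 0 := by
      rw [← vecMul_vecMul, hηM, h2]
    have h0 := (hT2 lam).mp (hrk lam hlam) η hc1 hc2
    rw [hηM] at h0
    exact h0

end Main

/-- informativity for controllability / stabilizability with process noise
only, where ker M = im E. -/
theorem informative_controllability_stabilizability_process_noise (n m q T k : ℕ)
    (hn : 1 ≤ n) (hm : 1 ≤ m) (hq : 1 ≤ q) (hT : 1 ≤ T)
    (B : Matrix (Fin n) (Fin m) ℝ) (E : Matrix (Fin n) (Fin q) ℝ)
    (U : Matrix (Fin m) (Fin T) ℝ) (X : Matrix (Fin n) (Fin (T + 1)) ℝ)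
    (M : Matrix (Fin k) (Fin n) ℝ)
    (hAdat : (AdatP B E U X).Nonempty)
    (hM : LinearMap.ker M.mulVecLin = LinearMap.range E.mulVecLin) :
    ((∀ A ∈ AdatP B E U X, ∀ lam : ℂ,
        (fromCols (cx A - lam • 1) (cx B)).rank = n) ↔
      (LinearMap.ker M.mulVecLin ≤ LinearMap.range B.mulVecLin ∧
        ∀ lam : ℂ,
          (fromCols (cx M * cx (Xplus X) - lam • (cx M * cx (Xminus X)))
            (cx M * cx B)).rank = M.rank))
    ∧
    ((∀ A ∈ AdatP B E U X, ∀ lam : ℂ, 1 ≤ ‖lam‖ →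
        (fromCols (cx A - lam • 1) (cx B)).rank = n) ↔
      (LinearMap.ker M.mulVecLin ≤ LinearMap.range B.mulVecLin ∧
        ∀ lam : ℂ, 1 ≤ ‖lam‖ →
          (fromCols (cx M * cx (Xplus X) - lam • (cx M * cx (Xminus X)))
            (cx M * cx B)).rank = M.rank)) := by
  constructor
  · have h := main_aux Set.univ (Set.mem_univ 1) B E U X M hAdat hM
    simpa using h
  · have h := main_aux {z : ℂ | 1 ≤ ‖z‖} (by simp) B E U X M hAdat hM
    simpa using h
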